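/- Let n < m be positive integers and let α₁,…,αₙ, β_{n+1},…,β_m be positive integers with α₁+⋯+αₙ = β_{n+1}+⋯+β_m. A point (x₁,…,x_m) ∈ ℝ^m belongs to Δ(α,β) if and only if x₁+⋯+x_m ≤ 1 + min{0, x_{n+1}/β_{n+1},…, x_m/β_m} and x_i ≥ −α_i · min{0, x_{n+1}/β_{n+1},…, x_m/β_m} for i = 1,…,n. -/

import Mathlib

/-- inequalities defining the polytope Δ(α,β). -/
theorem stmt_8 (n m : ℕ) (hn : 0 < n) (hnm : n < m)
    (α : Fin n → ℕ) (β : Fin (m - n) → ℕ)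
    (hα : ∀ i, 0 < α i) (hβ : ∀ j, 0 < β j)
    (hsum : ∑ i, α i = ∑ j, β j)
    (b : Fin m → ℝ)
    (hb : ∀ i : Fin m, b i = if h : (i : ℕ) < n then (α ⟨i, h⟩ : ℝ)
      else -(β ⟨(i : ℕ) - n, by have := i.isLt; omega⟩ : ℝ))
    (Δ : Set (Fin m → ℝ))
    (hΔ : Δ = convexHull ℝ
      ({0} ∪ Set.range (fun i : Fin m => Pi.single i (1 : ℝ)) ∪ {b}))
    (μ : (Fin m → ℝ) → ℝ)
    (hμ : ∀ x : Fin m → ℝ, μ x = min 0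
      (Finset.univ.inf' ⟨⟨0, by omega⟩, Finset.mem_univ _⟩
        (fun j : Fin (m - n) =>
          x ⟨n + j, by have := j.isLt; omega⟩ / (β j : ℝ)))) :
    ∀ x : Fin m → ℝ, x ∈ Δ ↔
      ((∑ i, x i ≤ 1 + μ x) ∧
        ∀ i : Fin n, -(α i : ℝ) * μ x ≤ x ⟨i, by have := i.isLt; omega⟩) := by
  -- basic coordinate facts about b
  have hbi : ∀ i : Fin n, b ⟨i, by have := i.isLt; omega⟩ = (α i : ℝ) := by
    intro i
    rw [hb]
    rw [dif_pos i.isLt]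
  have hbj : ∀ j : Fin (m - n), b ⟨n + j, by have := j.isLt; omega⟩ = -(β j : ℝ) := by
    intro j
    rw [hb]
    have h1 : ¬ ((n + (j : ℕ)) < n) := by omega
    rw [dif_neg h1]
    refine congrArg (fun r : Fin (m - n) => -((β r : ℕ) : ℝ)) (Fin.ext ?_)
    simp
  -- properties of μ
  have hμ0 : ∀ x : Fin m → ℝ, μ x ≤ 0 := fun x => by rw [hμ]; exact min_le_left _ _
  have hμle : ∀ (x : Fin m → ℝ) (j : Fin (m - n)),
      μ x ≤ x ⟨n + j, by have := j.isLt; omega⟩ / (β j : ℝ) := by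
    intro x j
    rw [hμ]
    exact (min_le_right _ _).trans (Finset.inf'_le _ (Finset.mem_univ j))
  have hβ' : ∀ j, (0 : ℝ) < (β j : ℝ) := fun j => by exact_mod_cast hβ j
  -- sum of b is zero
  have hsumb : ∑ k, b k = 0 := by
    have h : n + (m - n) = m := by omega
    rw [← Equiv.sum_comp (finSumFinEquiv.trans (finCongr h)) b, Fintype.sum_sum_type]
    have h1 : ∀ i : Fin n, b ((finSumFinEquiv.trans (finCongr h)) (Sum.inl i)) = (α i : ℝ) := by
      intro i
      have he : (finSumFinEquiv.trans (finCongr h)) (Sum.inl i)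
          = ⟨i, by have := i.isLt; omega⟩ :=
        Fin.ext (by simp)
      rw [he, hbi]
    have h2 : ∀ j : Fin (m - n),
        b ((finSumFinEquiv.trans (finCongr h)) (Sum.inr j)) = -(β j : ℝ) := by
      intro j
      have he : (finSumFinEquiv.trans (finCongr h)) (Sum.inr j)
          = ⟨n + j, by have := j.isLt; omega⟩ :=
        Fin.ext (by simp)
      rw [he, hbj]
    rw [Finset.sum_congr rfl (fun i _ => h1 i), Finset.sum_congr rfl (fun j _ => h2 j)]
    have hc : (∑ i, (α i : ℝ)) = ∑ j, (β j : ℝ) := by exact_mod_cast hsum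
    simp only [Finset.sum_neg_distrib]
    linarith
  set T : Set (Fin m → ℝ) := {y | (∑ i, y i ≤ 1 + μ y) ∧
      ∀ i : Fin n, -(α i : ℝ) * μ y ≤ y ⟨i, by have := i.isLt; omega⟩} with hT
  -- concavity of μ
  have hμconc : ∀ (p q : Fin m → ℝ) (a c : ℝ), 0 ≤ a → 0 ≤ c → a + c = 1 →
      a * μ p + c * μ q ≤ μ (a • p + c • q) := by
    intro p q a c ha hc hac
    rw [hμ (a • p + c • q)]
    apply le_min
    · have := mul_nonpos_of_nonneg_of_nonpos ha (hμ0 p)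
      have := mul_nonpos_of_nonneg_of_nonpos hc (hμ0 q)
      linarith
    · apply Finset.le_inf'
      intro j _
      have h1 : (a • p + c • q) ⟨n + j, by have := j.isLt; omega⟩
          = a * p ⟨n + j, by have := j.isLt; omega⟩ + c * q ⟨n + j, by have := j.isLt; omega⟩ := rfl
      rw [h1, add_div, mul_div_assoc, mul_div_assoc]
      have := mul_le_mul_of_nonneg_left (hμle p j) ha
      have := mul_le_mul_of_nonneg_left (hμle q j) hc
      linarith
  -- generators are in T
  have h0T : (0 : Fin m → ℝ) ∈ T := by
    have hμz : μ (0 : Fin m → ℝ) = 0 := by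
      rw [hμ]; simp
      apply Finset.le_inf'
      intro j _
      exact le_rfl
    constructor
    · simp [hμz]
    · intro i
      simp [hμz]
  have heT : ∀ i : Fin m, Pi.single i (1 : ℝ) ∈ T := by
    intro i
    have hμe : μ (Pi.single i 1) = 0 := by
      rw [hμ]
      rw [min_eq_left]
      apply Finset.le_inf'
      intro j _
      apply div_nonneg _ (le_of_lt (hβ' j))
      rw [Pi.single_apply]
      split <;> norm_num
    constructor
    · rw [hμe]
      have : ∑ k, Pi.single i (1 : ℝ) k = 1 := by
        simp [Pi.single_apply]
      rw [this]; norm_num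
    · intro k
      rw [hμe]
      have : (0:ℝ) ≤ (Pi.single i (1 : ℝ) : Fin m → ℝ) ⟨k, by have := k.isLt; omega⟩ := by
        rw [Pi.single_apply]; split <;> norm_num
      nlinarith [this]
  have hbT : b ∈ T := by
    have hμb : μ b = -1 := by
      rw [hμ]
      have hc : ∀ j : Fin (m - n), j ∈ Finset.univ →
          b ⟨n + j, by have := j.isLt; omega⟩ / (β j : ℝ) = -1 := by
        intro j _
        rw [hbj j, neg_div, div_self (ne_of_gt (hβ' j))]
      apply le_antisymm
      · refine (min_le_right _ _).trans ?_
        refine (Finset.inf'_le _ (Finset.mem_univ ⟨0, by omega⟩)).trans ?_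
        exact le_of_eq (hc _ (Finset.mem_univ _))
      · refine le_min (by norm_num) ?_
        apply Finset.le_inf'
        intro j hj
        exact le_of_eq (hc j hj).symm
    constructor
    · rw [hμb, hsumb]; norm_num
    · intro i
      rw [hμb, hbi i]
      nlinarith [(Nat.cast_nonneg (α i) : (0:ℝ) ≤ (α i : ℝ))]
  -- convexity of T
  have hTconv : Convex ℝ T := by
    rintro p ⟨hp1, hp2⟩ q ⟨hq1, hq2⟩ a c ha hc hac
    have hμc := hμconc p q a c ha hc hac
    constructor
    · have hs : ∑ i, (a • p + c • q) i = a * ∑ i, p i + c * ∑ i, q i := by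
        simp [Finset.mul_sum, Finset.sum_add_distrib]
      rw [hs]
      have := mul_le_mul_of_nonneg_left hp1 ha
      have := mul_le_mul_of_nonneg_left hq1 hc
      nlinarith
    · intro i
      have h1 : (a • p + c • q) ⟨i, by have := i.isLt; omega⟩
          = a * p ⟨i, by have := i.isLt; omega⟩ + c * q ⟨i, by have := i.isLt; omega⟩ := rfl
      rw [h1]
      have hp2i := mul_le_mul_of_nonneg_left (hp2 i) ha
      have hq2i := mul_le_mul_of_nonneg_left (hq2 i) hc
      nlinarith [hμc]
  intro x
  constructor
  · -- forward direction
    intro hx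
    rw [hΔ] at hx
    have key : x ∈ T := by
      refine convexHull_min ?_ hTconv hx
      rintro p ((hp | ⟨i, rfl⟩) | hp)
      · rw [Set.mem_singleton_iff] at hp; subst hp; exact h0T
      · exact heT i
      · rw [Set.mem_singleton_iff] at hp; subst hp; exact hbT
    exact key
  · -- backward direction
    rintro ⟨h1, h2⟩
    rw [hΔ]
    set t : ℝ := -μ x with ht
    have htn : 0 ≤ t := neg_nonneg.mpr (hμ0 x)
    set lam : Fin m → ℝ := fun k => x k - t * b k with hlam
    have hlamn : ∀ k, 0 ≤ lam k := by
      intro k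
      rw [hlam]
      simp only []
      by_cases hk : (k : ℕ) < n
      · have hk' : k = ⟨(⟨(k : ℕ), hk⟩ : Fin n), by omega⟩ := Fin.ext rfl
        rw [hk', hbi ⟨(k : ℕ), hk⟩]
        have h2' := h2 ⟨(k : ℕ), hk⟩
        have he : x (⟨(⟨(k : ℕ), hk⟩ : Fin n), by omega⟩ : Fin m)
            = x ⟨(⟨(k : ℕ), hk⟩ : Fin n), by have := (⟨(k : ℕ), hk⟩ : Fin n).isLt; omega⟩ := rfl
        rw [he]
        rw [ht]
        nlinarith [h2']
      · have hk2 : (k : ℕ) - n < m - n := by have := k.isLt; omega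
        have hk' : k = ⟨n + (⟨(k : ℕ) - n, hk2⟩ : Fin (m - n)),
            by have := (⟨(k : ℕ) - n, hk2⟩ : Fin (m - n)).isLt; omega⟩ :=
          Fin.ext (by simp only []; omega)
        rw [hk', hbj ⟨(k : ℕ) - n, hk2⟩]
        have hle := hμle x ⟨(k : ℕ) - n, hk2⟩
        have hb0 := hβ' ⟨(k : ℕ) - n, hk2⟩
        have hxk := (le_div_iff₀ hb0).mp hle
        rw [ht]
        nlinarith [hxk]
    have hslam : ∑ k, lam k = ∑ k, x k := by
      rw [hlam]
      rw [Finset.sum_sub_distrib, ← Finset.mul_sum, hsumb]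
      ring
    have hw0 : 0 ≤ 1 - t - ∑ k, lam k := by
      rw [hslam, ht]
      linarith [h1]
    have hxrep : x = ∑ s : Fin m ⊕ Bool,
        (Sum.elim lam (fun s => if s then t else 1 - t - ∑ k, lam k) s) •
        (Sum.elim (fun i : Fin m => Pi.single i (1:ℝ)) (fun s => if s then b else 0) s) := by
      rw [Fintype.sum_sum_type, Fintype.sum_bool]
      funext r
      simp only [Sum.elim_inl, Sum.elim_inr, if_true, Bool.false_eq_true, if_false, Pi.add_apply,
        Finset.sum_apply, Pi.smul_apply, smul_eq_mul, Pi.zero_apply, mul_zero, add_zero]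
      rw [Finset.sum_congr rfl (fun k _ => by rw [Pi.single_apply, mul_ite, mul_one, mul_zero])]
      rw [Finset.sum_ite_eq Finset.univ r lam]
      simp only [Finset.mem_univ, if_true, hlam]
      ring
    rw [hxrep]
    apply (convex_convexHull ℝ _).sum_mem
    · rintro (i | s) _
      · exact hlamn i
      · cases s
        · simpa using hw0
        · simpa using htn
    · rw [Fintype.sum_sum_type, Fintype.sum_bool]
      simp only [Sum.elim_inl, Sum.elim_inr, if_true, Bool.false_eq_true, if_false]
      ring
    · rintro (i | s) _
      · exact subset_convexHull ℝ _ (Or.inl (Or.inr ⟨i, rfl⟩))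
      · cases s
        · exact subset_convexHull ℝ _ (Or.inl (Or.inl rfl))
        · exact subset_convexHull ℝ _ (Or.inr rfl)
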